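/- arXiv:0801.4939 — 6 statements merged into one kernel-verified Lean document; each statement's English description precedes it below -/
import Mathlib

section
/- Let p_1(z_1,...,z_d) be a Laurent polynomial in ℂ[z_1^{±1},...,z_d^{±1}] such that for each j = 1,...,d, substituting z_j → z_j^{-1} changes p_1 to -p_1. Then p_1 is divisible in the Laurent polynomial ring by ∏_{j=1}^d (z_j - z_j^{-1}). -/
/-- Negation of the `j`-th coordinate, as an additive automorphism of `Fin d → ℤ`. -/
def negAt {d : ℕ} (j : Fin d) : (Fin d → ℤ) ≃+ (Fin d → ℤ) where
  toFun v := Function.update v j (-(v j))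
  invFun v := Function.update v j (-(v j))
  left_inv v := by
    ext i
    by_cases h : i = j <;> simp [Function.update_apply, h] <;> ring
  right_inv v := by
    ext i
    by_cases h : i = j <;> simp [Function.update_apply, h] <;> ring
  map_add' u v := by
    ext i
    by_cases h : i = j <;> simp [Function.update_apply, h] <;> ring

/-- The involution `I_j : z_j ↦ z_j⁻¹` of the Laurent polynomial ring
`ℂ[z₁^{±1},…,z_d^{±1}] = ℂ[Fin d → ℤ]`. -/
noncomputable def laurentInv {d : ℕ} (j : Fin d) :
    AddMonoidAlgebra ℂ (Fin d → ℤ) ≃ₐ[ℂ] AddMonoidAlgebra ℂ (Fin d → ℤ) :=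
  AddMonoidAlgebra.domCongr ℂ ℂ (negAt j)

section Aux

variable {d : ℕ}

local notation "R" => AddMonoidAlgebra ℂ (Fin d → ℤ)

/-- The factor `z_j - z_j⁻¹`. -/
noncomputable def Fj (j : Fin d) : AddMonoidAlgebra ℂ (Fin d → ℤ) :=
  AddMonoidAlgebra.single (Pi.single j (1 : ℤ)) (1 : ℂ) -
    AddMonoidAlgebra.single (Pi.single j (-1 : ℤ)) (1 : ℂ)

lemma negAt_apply (j : Fin d) (v : Fin d → ℤ) :
    negAt j v = Function.update v j (-(v j)) := rfl

lemma negAt_pi_single_ne (j a : Fin d) (h : a ≠ j) (c : ℤ) :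
    negAt j (Pi.single a c) = Pi.single a c := by
  ext i
  rw [negAt_apply, Function.update_apply]
  by_cases hi : i = j
  · subst hi
    simp [Pi.single_eq_of_ne (Ne.symm h)]
  · simp [hi]

lemma negAt_pi_single_self (j : Fin d) (c : ℤ) :
    negAt j (Pi.single j c) = Pi.single j (-c) := by
  ext i
  rw [negAt_apply, Function.update_apply]
  by_cases hi : i = j
  · subst hi; simp
  · simp [hi, Pi.single_eq_of_ne hi]

lemma Fj_ne_zero (j : Fin d) : Fj (d := d) j ≠ 0 := by
  intro hF
  rw [Fj, sub_eq_zero] at hF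
  have := (AddMonoidAlgebra.single_left_inj (one_ne_zero (α := ℂ))).mp hF
  have := congrFun this j
  simp at this

/-- `F j` divides `z_j^n - z_j^{-n}` for natural `n`. -/
lemma Fj_dvd_nat (j : Fin d) (n : ℕ) :
    Fj (d := d) j ∣ (AddMonoidAlgebra.single (Pi.single j (n : ℤ)) (1 : ℂ) -
      AddMonoidAlgebra.single (Pi.single j (-(n : ℤ))) (1 : ℂ)) := by
  induction n with
  | zero => simp
  | succ n ih =>
    have key : (AddMonoidAlgebra.single (Pi.single j ((n+1 : ℕ) : ℤ)) (1 : ℂ) -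
        AddMonoidAlgebra.single (Pi.single j (-((n+1 : ℕ) : ℤ))) (1 : ℂ) : R) =
        AddMonoidAlgebra.single (Pi.single j (1 : ℤ)) (1 : ℂ) *
          (AddMonoidAlgebra.single (Pi.single j (n : ℤ)) (1 : ℂ) -
            AddMonoidAlgebra.single (Pi.single j (-(n : ℤ))) (1 : ℂ)) +
        AddMonoidAlgebra.single (Pi.single j (-(n : ℤ))) (1 : ℂ) * Fj j := by
      rw [Fj, mul_sub, mul_sub,
        AddMonoidAlgebra.single_mul_single, AddMonoidAlgebra.single_mul_single,
        AddMonoidAlgebra.single_mul_single, AddMonoidAlgebra.single_mul_single,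
        ← Pi.single_add, ← Pi.single_add, ← Pi.single_add, ← Pi.single_add]
      push_cast
      ring_nf
    rw [key]
    exact dvd_add (Dvd.dvd.mul_left ih _) (Dvd.dvd.mul_left dvd_rfl _)

lemma Fj_dvd_int (j : Fin d) (n : ℤ) :
    Fj (d := d) j ∣ (AddMonoidAlgebra.single (Pi.single j n) (1 : ℂ) -
      AddMonoidAlgebra.single (Pi.single j (-n)) (1 : ℂ)) := by
  rcases Int.natAbs_eq n with hn | hn
  · rw [hn]; exact Fj_dvd_nat j n.natAbs
  · rw [hn, neg_neg, ← dvd_neg, neg_sub]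
    exact Fj_dvd_nat j n.natAbs

lemma Fj_dvd_monomial_sub (j : Fin d) (v : Fin d → ℤ) :
    Fj (d := d) j ∣ (AddMonoidAlgebra.single v (1 : ℂ) -
      AddMonoidAlgebra.single (negAt j v) (1 : ℂ)) := by
  set w : Fin d → ℤ := Function.update v j 0 with hw
  have h1 : v = w + Pi.single j (v j) := by
    ext i
    by_cases hi : i = j
    · subst hi; simp [hw]
    · simp [hw, Function.update_apply, hi, Pi.single_eq_of_ne hi]
  have h2 : negAt j v = w + Pi.single j (-(v j)) := by
    ext i
    rw [negAt_apply]
    by_cases hi : i = j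
    · subst hi; simp [hw]
    · simp [hw, Function.update_apply, hi, Pi.single_eq_of_ne hi]
  have key : (AddMonoidAlgebra.single v (1 : ℂ) -
      AddMonoidAlgebra.single (negAt j v) (1 : ℂ) : R) =
      AddMonoidAlgebra.single w (1 : ℂ) *
        (AddMonoidAlgebra.single (Pi.single j (v j)) (1 : ℂ) -
          AddMonoidAlgebra.single (Pi.single j (-(v j))) (1 : ℂ)) := by
    rw [mul_sub, AddMonoidAlgebra.single_mul_single, AddMonoidAlgebra.single_mul_single,
      mul_one, ← h1, ← h2]
  rw [key]
  exact Dvd.dvd.mul_left (Fj_dvd_int j (v j)) _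

lemma laurentInv_single (j : Fin d) (v : Fin d → ℤ) (c : ℂ) :
    laurentInv j (AddMonoidAlgebra.single v c) = AddMonoidAlgebra.single (negAt j v) c := by
  simp [laurentInv]

/-- Base lemma: single anti-invariance implies divisibility by `F j`. -/
lemma Fj_dvd_of_anti (j : Fin d) (q : AddMonoidAlgebra ℂ (Fin d → ℤ))
    (hq : laurentInv j q = -q) : Fj (d := d) j ∣ q := by
  have hrep : q = ∑ v ∈ q.coeff.support, AddMonoidAlgebra.single v (q.coeff v) := by
    exact (AddMonoidAlgebra.sum_coeff_single q).symm
  have hdvd : Fj (d := d) j ∣ q - laurentInv j q := by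
    conv_lhs => skip
    rw [hrep, map_sum, ← Finset.sum_sub_distrib]
    apply Finset.dvd_sum
    intro v _
    rw [laurentInv_single]
    have : (AddMonoidAlgebra.single v (q.coeff v) -
        AddMonoidAlgebra.single (negAt j v) (q.coeff v) : R) =
        (AddMonoidAlgebra.single v (1 : ℂ) -
          AddMonoidAlgebra.single (negAt j v) (1 : ℂ)) *
          AddMonoidAlgebra.single (0 : Fin d → ℤ) (q.coeff v) := by
      rw [sub_mul, AddMonoidAlgebra.single_mul_single, AddMonoidAlgebra.single_mul_single]
      simp
    rw [this]
    exact Dvd.dvd.mul_right (Fj_dvd_monomial_sub j v) _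
  rw [hq, sub_neg_eq_add] at hdvd
  have h2 : q + q = AddMonoidAlgebra.single (0 : Fin d → ℤ) (2 : ℂ) * q := by
    rw [show (AddMonoidAlgebra.single (0 : Fin d → ℤ) (2 : ℂ) : R) =
      AddMonoidAlgebra.single 0 1 + AddMonoidAlgebra.single 0 1 by
        rw [← AddMonoidAlgebra.single_add]; norm_num]
    rw [add_mul, ← AddMonoidAlgebra.one_def]
    simp
  rw [h2] at hdvd
  have : q = AddMonoidAlgebra.single (0 : Fin d → ℤ) ((2 : ℂ)⁻¹) *
      (AddMonoidAlgebra.single (0 : Fin d → ℤ) (2 : ℂ) * q) := by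
    rw [← mul_assoc, AddMonoidAlgebra.single_mul_single]
    norm_num
    rw [← AddMonoidAlgebra.one_def, one_mul]
  rw [this]
  exact Dvd.dvd.mul_left hdvd _

lemma laurentInv_Fj (a j : Fin d) (h : j ≠ a) : laurentInv a (Fj (d := d) j) = Fj j := by
  rw [Fj, map_sub, laurentInv_single, laurentInv_single,
    negAt_pi_single_ne a j h, negAt_pi_single_ne a j h]

end Aux


/-- If a Laurent polynomial `p` satisfies `I_j(p) = -p` for every `j`, then `p` is divisible
by `∏_{j=1}^d (z_j - z_j⁻¹)` in the Laurent polynomial ring. -/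
theorem antiinvariant_divisible (d : ℕ) (p : AddMonoidAlgebra ℂ (Fin d → ℤ))
    (h : ∀ j : Fin d, laurentInv j p = -p) :
    (∏ j : Fin d,
        ((AddMonoidAlgebra.single (Pi.single j (1 : ℤ)) (1 : ℂ) : AddMonoidAlgebra ℂ (Fin d → ℤ)) -
          AddMonoidAlgebra.single (Pi.single j (-1 : ℤ)) (1 : ℂ))) ∣ p := by
  have main : ∀ S : Finset (Fin d), (∏ j ∈ S, Fj j) ∣ p := by
    intro S
    induction S using Finset.induction_on with
    | empty => simp
    | @insert a S ha ih =>
      obtain ⟨q, hq⟩ := ih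
      have hSne : (∏ j ∈ S, Fj j) ≠ 0 := by
        apply Finset.prod_ne_zero_iff.mpr
        intro j _
        exact Fj_ne_zero j
      have hanti : laurentInv a q = -q := by
        have hp := h a
        rw [hq, map_mul] at hp
        have hprod : laurentInv a (∏ j ∈ S, Fj j) = ∏ j ∈ S, Fj j := by
          rw [map_prod]
          exact Finset.prod_congr rfl fun j hj => laurentInv_Fj a j (fun he => ha (he ▸ hj))
        rw [hprod] at hp
        have : (∏ j ∈ S, Fj j) * laurentInv a q = (∏ j ∈ S, Fj j) * (-q) := by
          rw [hp]; ring
        exact mul_left_cancel₀ hSne this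
      obtain ⟨r, hr⟩ := Fj_dvd_of_anti a q hanti
      refine ⟨r, ?_⟩
      rw [Finset.prod_insert ha, hq, hr]
      ring
  exact main Finset.univ
end

section
/- Let q ∈ (0,1) and let α_0,...,α_{d+2} be nonzero real numbers. The condition that |α_{k+1} α_k^{-1} z_{k+1}^{ε_1} z_k^{ε_2}| < 1 for all ε_1, ε_2 ∈ {-1,1}, all k = 0,...,d, and all (z_1,...,z_d) on the unit torus (|z_j| = 1), with the conventions z_0 = α_0 and z_{d+1} = α_{d+2}, is equivalent to: 0 < |α_{d+1}| < |α_d| < ... < |α_1| < min(1, |α_0|^2) and |α_{d+1}|/|α_d| < |α_{d+2}| < |α_d|/|α_{d+1}|. -/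
lemma mem_pm_one (ε : ℤ) (h : ε ∈ ({-1, 1} : Set ℤ)) : ε = -1 ∨ ε = 1 := by
  simpa using h

lemma abs_expr (a : ℝ) (u v : ℂ) (ε₁ ε₂ : ℤ) :
    ‖(a : ℂ) * u ^ ε₁ * v ^ ε₂‖
      = |a| * ‖u‖ ^ ε₁ * ‖v‖ ^ ε₂ := by
  simp [norm_mul, norm_zpow, Complex.norm_real]

/-- The torus condition `|α_{k+1} α_k⁻¹ z_{k+1}^{ε₁} z_k^{ε₂}| < 1` (for all `ε₁,ε₂ ∈ {-1,1}`,
all `k = 0,…,d`, and all `z` on the unit torus, with `z_0 = α_0`, `z_{d+1} = α_{d+2}`)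
is equivalent to `0 < |α_{d+1}| < |α_d| < ⋯ < |α_1| < min(1,|α_0|²)` together with
`|α_{d+1}|/|α_d| < |α_{d+2}| < |α_d|/|α_{d+1}|`. -/
theorem torus_condition_iff (d : ℕ) (hd : 1 ≤ d) (q : ℝ) (hq0 : 0 < q) (hq1 : q < 1)
    (α : ℕ → ℝ) (hα : ∀ j ≤ d + 2, α j ≠ 0) :
    (∀ z : ℕ → ℂ, z 0 = (α 0 : ℂ) → z (d + 1) = (α (d + 2) : ℂ) →
      (∀ k, 1 ≤ k → k ≤ d → ‖z k‖ = 1) →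
      ∀ k ≤ d, ∀ ε₁ ∈ ({-1, 1} : Set ℤ), ∀ ε₂ ∈ ({-1, 1} : Set ℤ),
        ‖((α (k + 1) / α k : ℝ) : ℂ) * z (k + 1) ^ ε₁ * z k ^ ε₂‖ < 1) ↔
    ((∀ k, 1 ≤ k → k ≤ d → |α (k + 1)| < |α k|) ∧
      0 < |α (d + 1)| ∧ |α 1| < min 1 (|α 0| ^ 2) ∧
      |α (d + 1)| / |α d| < |α (d + 2)| ∧ |α (d + 2)| < |α d| / |α (d + 1)|) := by
  have habs : ∀ j ≤ d + 2, 0 < |α j| := fun j hj => abs_pos.mpr (hα j hj)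
  have h0 : 0 < |α 0| := habs 0 (by omega)
  have hd1 : 0 < |α (d + 1)| := habs (d + 1) (by omega)
  have hd2 : 0 < |α (d + 2)| := habs (d + 2) (by omega)
  have hdd : 0 < |α d| := habs d (by omega)
  have h1p : 0 < |α 1| := habs 1 (by omega)
  have mem1 : (1 : ℤ) ∈ ({-1, 1} : Set ℤ) := by norm_num
  have memm1 : (-1 : ℤ) ∈ ({-1, 1} : Set ℤ) := by norm_num
  constructor
  · intro H
    set z : ℕ → ℂ := fun j => if j = 0 then (α 0 : ℂ) else if j = d + 1 then (α (d + 2) : ℂ) else 1 with hz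
    have hz0 : z 0 = (α 0 : ℂ) := by simp [hz]
    have hzd : z (d + 1) = (α (d + 2) : ℂ) := by simp [hz]
    have hzt : ∀ k, 1 ≤ k → k ≤ d → ‖z k‖ = 1 := by
      intro k hk1 hk2
      have h1 : k ≠ 0 := by omega
      have h2 : k ≠ d + 1 := by omega
      simp [hz, h1, h2]
    have H' := H z hz0 hzd hzt
    -- k = d instances
    have z1 : z 1 = 1 := by
      have : (1 : ℕ) ≠ d + 1 := by omega
      simp [hz, this, show d ≠ 0 by omega]
    have zd : z d = 1 := by
      have h1 : d ≠ 0 := by omega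
      have h2 : d ≠ d + 1 := by omega
      simp [hz, h1, h2]
    have hD1 : |α (d + 1) / α d| * |α (d + 2)| < 1 := by
      have := H' d le_rfl 1 mem1 1 mem1
      rw [abs_expr] at this
      simpa [hzd, zd, Complex.norm_real] using this
    have hD2 : |α (d + 1) / α d| / |α (d + 2)| < 1 := by
      have := H' d le_rfl (-1) memm1 1 mem1
      rw [abs_expr] at this
      simpa [hzd, zd, Complex.norm_real, div_eq_mul_inv] using this
    have hAd : 0 < |α (d + 1) / α d| := by
      rw [abs_div]; positivity
    have hchain : ∀ k, 1 ≤ k → k ≤ d → |α (k + 1)| < |α k| := by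
      intro k hk1 hk2
      rcases eq_or_lt_of_le hk2 with rfl | hlt
      · -- k = d
        have hA1 : |α (k + 1) / α k| < 1 := by
          nlinarith [hAd, hd2, (div_lt_one hd2).mp hD2]
        rw [abs_div, div_lt_one (habs k (by omega))] at hA1
        exact hA1
      · have hne : k + 1 ≠ d + 1 := by omega
        have zk1 : z (k + 1) = 1 := by simp [hz, hne, show k ≠ d by omega]
        have zk : z k = 1 := by
          have h1 : k ≠ 0 := by omega
          have h2 : k ≠ d + 1 := by omega
          simp [hz, h1, h2]
        have := H' k (by omega) 1 mem1 1 mem1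
        rw [abs_expr] at this
        simp only [zk1, zk, norm_one, one_zpow, mul_one] at this
        rw [abs_div, div_lt_one (habs k (by omega))] at this
        exact this
    refine ⟨hchain, hd1, ?_, ?_, ?_⟩
    · -- |α 1| < min 1 (|α 0|^2)
      have hA : |α 1 / α 0| = |α 1| / |α 0| := abs_div _ _
      have hh1 : |α 1 / α 0| * |α 0| < 1 := by
        have := H' 0 (by omega) 1 mem1 1 mem1
        rw [abs_expr] at this
        simpa [z1, hz0, Complex.norm_real] using this
      have hh2 : |α 1 / α 0| / |α 0| < 1 := by
        have := H' 0 (by omega) 1 mem1 (-1) memm1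
        rw [abs_expr] at this
        simpa [z1, hz0, Complex.norm_real, div_eq_mul_inv] using this
      rw [hA, div_mul_cancel₀ _ h0.ne'] at hh1
      rw [hA, div_div, div_lt_one (by positivity)] at hh2
      rw [lt_min_iff]
      constructor
      · exact hh1
      · nlinarith [hh2]
    · rw [abs_div, div_div, div_lt_one (by positivity : (0:ℝ) < |α d| * |α (d + 2)|)] at hD2
      rw [div_lt_iff₀ hdd]
      nlinarith
    · rw [abs_div, div_mul_eq_mul_div, div_lt_one hdd] at hD1
      rw [lt_div_iff₀ hd1]
      nlinarith
  · rintro ⟨hchain, hpos, hmin, hlo, hhi⟩ z hz0 hzd hzt k hk ε₁ hε₁ ε₂ hε₂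
    rw [abs_expr]
    have hak : 0 < |α k| := habs k (by omega)
    have hak1 : 0 < |α (k + 1)| := habs (k + 1) (by omega)
    rw [abs_div]
    rcases Nat.eq_zero_or_pos k with rfl | hk1
    · -- k = 0
      have hz1 : ‖z 1‖ = 1 := hzt 1 le_rfl hd
      rw [hz1, one_zpow, mul_one, hz0, Complex.norm_real, Real.norm_eq_abs]
      have hm1 := (lt_min_iff.mp hmin).1
      have hm2 := (lt_min_iff.mp hmin).2
      rcases mem_pm_one ε₂ hε₂ with rfl | rfl
      · rw [zpow_neg_one, ← div_eq_mul_inv, div_div, ← sq,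
          div_lt_one (by positivity : (0:ℝ) < |α 0| ^ 2)]
        exact hm2
      · rw [zpow_one, div_mul_cancel₀ _ h0.ne']
        exact hm1
    · rcases eq_or_lt_of_le hk with rfl | hlt
      · -- k = d
        have hzk : ‖z k‖ = 1 := hzt k hk1 le_rfl
        rw [hzk, one_zpow, mul_one, hzd, Complex.norm_real, Real.norm_eq_abs]
        rcases mem_pm_one ε₁ hε₁ with rfl | rfl
        · rw [zpow_neg_one, ← div_eq_mul_inv, div_div,
            div_lt_one (by positivity : (0:ℝ) < |α k| * |α (k + 2)|)]
          rw [div_lt_iff₀ hak] at hlo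
          nlinarith
        · rw [zpow_one, div_mul_eq_mul_div, div_lt_one hdd]
          rw [lt_div_iff₀ hpos] at hhi
          nlinarith
      · -- 1 ≤ k < d
        have hzk : ‖z k‖ = 1 := hzt k hk1 hk
        have hzk1 : ‖z (k + 1)‖ = 1 := hzt (k + 1) (by omega) (by omega)
        rw [hzk, hzk1, one_zpow, one_zpow, mul_one, mul_one, div_lt_one hak]
        exact hchain k hk1 hk
end

section
/- Define the map f on triples (n, z, α) ∈ ℂ^d × (ℂ*)^d × (ℂ*)^{d+3} (with n taken modulo (2πi/log q)ℤ componentwise, or equivalently working with the variables q^{n_j}) by: q^{ñ_j} = α_{d+1-j} z_{d+1-j} / (α_{d+2-j} z_{d+2-j}) for j=1,...,d (with z_{d+1} := α_{d+2}), z̃_j = (α_{d+2-j}/α_0) q^{n_1+...+n_{d+1-j} - 1/2} for j=1,...,d, α̃_0 = α_0, α̃_j = (α_0 α_{d+1} α_{d+2}/α_{d+2-j}) q^{1/2} for j=1,...,d+1, and α̃_{d+2} = (α_1/α_0) q^{-1/2}. Then f is an involution: applying f twice returns the original triple (with q^{n_j} recovered). -/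
/-- The duality map `f : (n, z, α) ↦ (ñ, z̃, α̃)` for multivariable Askey-Wilson polynomials
is an involution. Here the discrete variables are encoded by `u_j = q^{n_j}`, `s = q^{1/2}`
is a fixed square root of `q`, the convention `z_{d+1} = α_{d+2}` (and its tilde analogue)
is in force, and `(u', z', α')` denotes the image of `(ũ, z̃, α̃)` under the same map;
the conclusion is `(u', z', α') = (u, z, α)`. -/
theorem duality_involution (d : ℕ) (hd : 1 ≤ d) (s : ℂ) (hs : s ≠ 0)
    (α z u tα tz tu pα pz pu : ℕ → ℂ)
    (hα : ∀ j ≤ d + 2, α j ≠ 0)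
    (hz : ∀ j, 1 ≤ j → j ≤ d → z j ≠ 0)
    (hu : ∀ j, 1 ≤ j → j ≤ d → u j ≠ 0)
    (hztop : z (d + 1) = α (d + 2))
    -- the tilde (dual) variables
    (htu : ∀ j, 1 ≤ j → j ≤ d →
      tu j = α (d + 1 - j) * z (d + 1 - j) / (α (d + 2 - j) * z (d + 2 - j)))
    (htz : ∀ j, 1 ≤ j → j ≤ d →
      tz j = α (d + 2 - j) / α 0 * (∏ i ∈ Finset.Icc 1 (d + 1 - j), u i) / s)
    (htα0 : tα 0 = α 0)
    (htα : ∀ j, 1 ≤ j → j ≤ d + 1 → tα j = α 0 * α (d + 1) * α (d + 2) * s / α (d + 2 - j))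
    (htαtop : tα (d + 2) = α 1 / (α 0 * s))
    (htztop : tz (d + 1) = tα (d + 2))
    -- the image of the tilde variables under the same map
    (hpu : ∀ j, 1 ≤ j → j ≤ d →
      pu j = tα (d + 1 - j) * tz (d + 1 - j) / (tα (d + 2 - j) * tz (d + 2 - j)))
    (hpz : ∀ j, 1 ≤ j → j ≤ d →
      pz j = tα (d + 2 - j) / tα 0 * (∏ i ∈ Finset.Icc 1 (d + 1 - j), tu i) / s)
    (hpα0 : pα 0 = tα 0)
    (hpα : ∀ j, 1 ≤ j → j ≤ d + 1 →
      pα j = tα 0 * tα (d + 1) * tα (d + 2) * s / tα (d + 2 - j))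
    (hpαtop : pα (d + 2) = tα 1 / (tα 0 * s)) :
    (∀ j, 1 ≤ j → j ≤ d → pu j = u j ∧ pz j = z j) ∧ (∀ j ≤ d + 2, pα j = α j) := by
  have hα0 := hα 0 (by omega)
  have hα1 := hα 1 (by omega)
  have hαd1 := hα (d+1) (by omega)
  have hαd2 := hα (d+2) (by omega)
  -- key: tα k * tz k = α(d+1) * α(d+2) * ∏ u over Icc 1 (d+1-k), for 1 ≤ k ≤ d+1
  have key : ∀ k, 1 ≤ k → k ≤ d + 1 →
      tα k * tz k = α (d+1) * α (d+2) * ∏ i ∈ Finset.Icc 1 (d+1-k), u i := by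
    intro k hk1 hk2
    rcases eq_or_lt_of_le hk2 with hk | hk
    · subst hk
      rw [show d + 1 - (d+1) = 0 by omega]
      rw [show (Finset.Icc 1 0 : Finset ℕ) = ∅ by rfl, Finset.prod_empty]
      rw [htztop, htαtop, htα (d+1) (by omega) (by omega),
        show d + 2 - (d+1) = 1 by omega]
      field_simp
    · have hkd : k ≤ d := by omega
      have h2 : d + 2 - k ≤ d + 2 := by omega
      rw [htα k hk1 (by omega), htz k hk1 hkd]
      have hne := hα (d+2-k) h2
      field_simp
  -- telescoping product of tu
  have keyU : ∀ k, 1 ≤ k → k ≤ d →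
      ∏ i ∈ Finset.Icc 1 k, tu i = α (d+1-k) * z (d+1-k) / (α (d+1) * α (d+2)) := by
    intro k
    induction k with
    | zero => omega
    | succ n ih =>
      intro _ h2
      rcases Nat.eq_zero_or_pos n with hn | hn
      · subst hn
        rw [Finset.Icc_self, Finset.prod_singleton, htu 1 le_rfl hd,
          show d + 2 - 1 = d + 1 by omega, show d + 1 - 1 = d by omega, hztop]
      · rw [Finset.prod_Icc_succ_top (by omega), ih (by omega) (by omega),
          htu (n+1) (by omega) h2,
          show d + 1 - (n+1) = d - n by omega, show d + 2 - (n+1) = d + 1 - n by omega]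
        have h1 : α (d+1-n) ≠ 0 := hα _ (by omega)
        have h2 : z (d+1-n) ≠ 0 := hz _ (by omega) (by omega)
        field_simp
  constructor
  · intro j hj1 hj2
    constructor
    · -- pu j = u j
      rw [hpu j hj1 hj2, key (d+1-j) (by omega) (by omega), key (d+2-j) (by omega) (by omega),
        show d + 1 - (d+1-j) = j by omega, show d + 1 - (d+2-j) = j - 1 by omega]
      obtain ⟨m, rfl⟩ : ∃ m, j = m + 1 := ⟨j - 1, by omega⟩
      rw [show m + 1 - 1 = m by omega, Finset.prod_Icc_succ_top (by omega)]
      have hP : (∏ i ∈ Finset.Icc 1 m, u i) ≠ 0 := by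
        rw [Finset.prod_ne_zero_iff]
        intro i hi
        simp only [Finset.mem_Icc] at hi
        exact hu i hi.1 (by omega)
      field_simp
    · -- pz j = z j
      rw [hpz j hj1 hj2, keyU (d+1-j) (by omega) (by omega), htα0,
        htα (d+2-j) (by omega) (by omega),
        show d + 2 - (d+2-j) = j by omega, show d + 1 - (d+1-j) = j by omega]
      have hαj : α j ≠ 0 := hα _ (by omega)
      have hzj : z j ≠ 0 := hz _ hj1 hj2
      field_simp
  · intro j hj
    rcases Nat.eq_zero_or_pos j with h0 | h1
    · subst h0; rw [hpα0, htα0]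
    · rcases eq_or_lt_of_le hj with hj2 | hj2
      · subst hj2
        rw [hpαtop, htα0, htα 1 le_rfl (by omega), show d + 2 - 1 = d + 1 by omega]
        field_simp
      · have hj3 : j ≤ d + 1 := by omega
        rw [hpα j h1 hj3, htα0, htα (d+1) (by omega) le_rfl, htαtop,
          htα (d+2-j) (by omega) (by omega),
          show d + 2 - (d+1) = 1 by omega, show d + 2 - (d+2-j) = j by omega]
        have hαj : α j ≠ 0 := hα _ (by omega)
        have e : α 0 * (α 0 * α (d+1) * α (d+2) * s / α 1) * (α 1 / (α 0 * s)) * s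
            = α 0 * α (d+1) * α (d+2) * s := by
          field_simp
        rw [e]
        have hA : α 0 * α (d+1) * α (d+2) * s ≠ 0 := by
          simp [hα0, hαd1, hαd2, hs]
        field_simp
end

section
/- Let a ∈ ℂ, q ∈ ℂ* and let n, ñ ∈ ℕ^d with partial sums N_k, Ñ_k (N_0 = Ñ_0 = 0). Suppose |n| = N_d and |ñ| = Ñ_d. Then ∏_{j=1}^d (a q^{N_{j-1} + Ñ_{d+1-j}} ; q)_{n_j} / ∏_{j=1}^d (a q^{Ñ_{j-1} + N_{d+1-j}} ; q)_{ñ_j} = (a;q)_{|n|} / (a;q)_{|ñ|}, provided all the denominators are nonzero. Equivalently as an identity in ℂ: ∏_{j=1}^d (a q^{N_{j-1}+Ñ_{d+1-j}};q)_{n_j} · (a;q)_{|ñ|} = ∏_{j=1}^d (a q^{Ñ_{j-1}+N_{d+1-j}};q)_{ñ_j} · (a;q)_{|n|}. -/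
/-- The finite q-Pochhammer symbol `(a;q)_k = ∏_{j=0}^{k-1} (1 - a q^j)`. -/
noncomputable def qPoch (q a : ℂ) (k : ℕ) : ℂ :=
  ∏ j ∈ Finset.range k, (1 - a * q ^ j)

lemma qPoch_add (q a : ℂ) (m k : ℕ) :
    qPoch q a (m + k) = qPoch q a m * qPoch q (a * q ^ m) k := by
  unfold qPoch
  rw [Finset.prod_range_add]
  congr 1
  refine Finset.prod_congr rfl fun j _ => ?_
  rw [pow_add]; ring

lemma key (q : ℂ) : ∀ (d : ℕ) (a : ℂ) (n nt : ℕ → ℕ),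
    (∏ j ∈ Finset.range d,
        qPoch q (a * q ^ ((∑ i ∈ Finset.range j, n i) +
          (∑ i ∈ Finset.range (d - j), nt i))) (n j)) *
      qPoch q a (∑ i ∈ Finset.range d, nt i) =
    (∏ j ∈ Finset.range d,
        qPoch q (a * q ^ ((∑ i ∈ Finset.range j, nt i) +
          (∑ i ∈ Finset.range (d - j), n i))) (nt j)) *
      qPoch q a (∑ i ∈ Finset.range d, n i) := by
  intro d
  induction d with
  | zero => simp
  | succ d ih =>
    intro a n nt
    set a' := a * q ^ n 0 with ha'
    have hL :
        (∏ j ∈ Finset.range d,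
          qPoch q (a * q ^ ((∑ i ∈ Finset.range (j + 1), n i) +
            (∑ i ∈ Finset.range (d + 1 - (j + 1)), nt i))) (n (j + 1))) =
        (∏ j ∈ Finset.range d,
          qPoch q (a' * q ^ ((∑ i ∈ Finset.range j, n (i + 1)) +
            (∑ i ∈ Finset.range (d - j), nt i))) (n (j + 1))) := by
      refine Finset.prod_congr rfl fun j _ => ?_
      congr 1
      rw [Finset.sum_range_succ', Nat.succ_sub_succ]
      rw [show (∑ i ∈ Finset.range j, n (i + 1)) + n 0 +
          (∑ i ∈ Finset.range (d - j), nt i) =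
          n 0 + ((∑ i ∈ Finset.range j, n (i + 1)) +
          (∑ i ∈ Finset.range (d - j), nt i)) from by ring]
      rw [pow_add, ha']; ring
    have hR :
        (∏ j ∈ Finset.range d,
          qPoch q (a * q ^ ((∑ i ∈ Finset.range j, nt i) +
            (∑ i ∈ Finset.range (d + 1 - j), n i))) (nt j)) =
        (∏ j ∈ Finset.range d,
          qPoch q (a' * q ^ ((∑ i ∈ Finset.range j, nt i) +
            (∑ i ∈ Finset.range (d - j), n (i + 1)))) (nt j)) := by
      refine Finset.prod_congr rfl fun j hj => ?_
      congr 1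
      have hj' : j < d := Finset.mem_range.mp hj
      rw [show d + 1 - j = (d - j) + 1 from by omega, Finset.sum_range_succ']
      rw [show (∑ i ∈ Finset.range j, nt i) +
          ((∑ i ∈ Finset.range (d - j), n (i + 1)) + n 0) =
          n 0 + ((∑ i ∈ Finset.range j, nt i) +
          (∑ i ∈ Finset.range (d - j), n (i + 1))) from by ring]
      rw [pow_add, ha']; ring
    have hIH := ih a' (fun i => n (i + 1)) nt
    rw [Finset.prod_range_succ', Finset.prod_range_succ, hL, hR]
    set L := ∏ j ∈ Finset.range d,
        qPoch q (a' * q ^ ((∑ i ∈ Finset.range j, n (i + 1)) +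
          (∑ i ∈ Finset.range (d - j), nt i))) (n (j + 1)) with hLdef
    set R := ∏ j ∈ Finset.range d,
        qPoch q (a' * q ^ ((∑ i ∈ Finset.range j, nt i) +
          (∑ i ∈ Finset.range (d - j), n (i + 1)))) (nt j) with hRdef
    set S := ∑ i ∈ Finset.range d, nt i with hS
    set N' := ∑ i ∈ Finset.range d, n (i + 1) with hN'
    -- normalize the special factors in the goal
    simp only [Finset.range_zero, Finset.sum_empty, Nat.sub_zero, zero_add,
      Nat.add_sub_cancel_left, Nat.add_sub_cancel, Finset.sum_range_one]
    rw [show a * q ^ (S + n 0) = a' * q ^ S from by rw [pow_add, ha']; ring]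
    set Nt := ∑ i ∈ Finset.range (d + 1), nt i with hNt
    have hNtS : Nt = S + nt d := by rw [hNt, hS, Finset.sum_range_succ]
    have hNn : (∑ i ∈ Finset.range (d + 1), n i) = n 0 + N' := by
      rw [hN', Finset.sum_range_succ']; ring
    have hA : qPoch q (a * q ^ Nt) (n 0) * qPoch q a Nt =
        qPoch q a (n 0) * (qPoch q a' S * qPoch q (a' * q ^ S) (nt d)) := by
      rw [mul_comm, ← qPoch_add, add_comm, qPoch_add, ← ha', hNtS, qPoch_add]
    have split4 : qPoch q a (∑ i ∈ Finset.range (d + 1), n i) =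
        qPoch q a (n 0) * qPoch q a' N' := by
      rw [hNn, qPoch_add, ha']
    linear_combination L * hA +
      qPoch q (a' * q ^ S) (nt d) * qPoch q a (n 0) * hIH -
      R * qPoch q (a' * q ^ S) (nt d) * split4

/-- Telescoping identity:
`∏_{j=1}^d (a q^{N_{j-1}+Ñ_{d+1-j}};q)_{n_j} ⋅ (a;q)_{|ñ|}
  = ∏_{j=1}^d (a q^{Ñ_{j-1}+N_{d+1-j}};q)_{ñ_j} ⋅ (a;q)_{|n|}`. -/
theorem qPoch_telescoping (d : ℕ) (q a : ℂ) (hq : q ≠ 0) (n nt : ℕ → ℕ) :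
    (∏ j ∈ Finset.Icc 1 d,
        qPoch q (a * q ^ ((∑ i ∈ Finset.Icc 1 (j - 1), n i) +
          (∑ i ∈ Finset.Icc 1 (d + 1 - j), nt i))) (n j)) *
      qPoch q a (∑ i ∈ Finset.Icc 1 d, nt i) =
    (∏ j ∈ Finset.Icc 1 d,
        qPoch q (a * q ^ ((∑ i ∈ Finset.Icc 1 (j - 1), nt i) +
          (∑ i ∈ Finset.Icc 1 (d + 1 - j), n i))) (nt j)) *
      qPoch q a (∑ i ∈ Finset.Icc 1 d, n i) := by
  have hsum : ∀ (f : ℕ → ℕ) (k : ℕ),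
      ∑ i ∈ Finset.Icc 1 k, f i = ∑ i ∈ Finset.range k, f (i + 1) := by
    intro f k
    induction k with
    | zero => simp
    | succ k ih =>
      rw [Finset.sum_Icc_succ_top (by omega), ih, Finset.sum_range_succ]
  have hprod : ∀ (g : ℕ → ℂ) (k : ℕ),
      ∏ j ∈ Finset.Icc 1 k, g j = ∏ j ∈ Finset.range k, g (j + 1) := by
    intro g k
    induction k with
    | zero => simp
    | succ k ih =>
      rw [Finset.prod_Icc_succ_top (by omega), ih, Finset.prod_range_succ]
  rw [hsum, hsum, hprod, hprod]
  have h1 : ∀ j, j ∈ Finset.range d →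
      qPoch q (a * q ^ ((∑ i ∈ Finset.Icc 1 (j + 1 - 1), n i) +
        (∑ i ∈ Finset.Icc 1 (d + 1 - (j + 1)), nt i))) (n (j + 1)) =
      qPoch q (a * q ^ ((∑ i ∈ Finset.range j, n (i + 1)) +
        (∑ i ∈ Finset.range (d - j), nt (i + 1)))) (n (j + 1)) := by
    intro j _
    rw [Nat.add_sub_cancel, Nat.succ_sub_succ, hsum, hsum]
  have h2 : ∀ j, j ∈ Finset.range d →
      qPoch q (a * q ^ ((∑ i ∈ Finset.Icc 1 (j + 1 - 1), nt i) +
        (∑ i ∈ Finset.Icc 1 (d + 1 - (j + 1)), n i))) (nt (j + 1)) =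
      qPoch q (a * q ^ ((∑ i ∈ Finset.range j, nt (i + 1)) +
        (∑ i ∈ Finset.range (d - j), n (i + 1)))) (nt (j + 1)) := by
    intro j _
    rw [Nat.add_sub_cancel, Nat.succ_sub_succ, hsum, hsum]
  rw [Finset.prod_congr rfl h1, Finset.prod_congr rfl h2]
  exact key q d a (fun i => n (i + 1)) (fun i => nt (i + 1))
end

section
/- Let q ∈ ℂ*, z ∈ ℂ* and ν ∈ ℕ. With x(z) = (z+z^{-1})/2 and the divided-difference operator D_z = z^{-1}(1 - E_z) where E_z f(z) = f(qz), one has D_z^ν (x^n) = 2^{-n} (q^{n-ν+1};q)_ν z^{n-ν} + (lower order terms in z), meaning D_z^ν(x^n) - 2^{-n}(q^{n-ν+1};q)_ν z^{n-ν} is a Laurent polynomial whose monomials z^k all have k < n - ν. -/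
/-- The q-scaling operator `z ↦ qz` on Laurent polynomials `ℂ[z,z⁻¹] = ℂ[ℤ]`:
it sends the monomial `c zᵐ` to `c qᵐ zᵐ`. -/
noncomputable def qScale (q : ℂ) (f : AddMonoidAlgebra ℂ ℤ) : AddMonoidAlgebra ℂ ℤ :=
  f.coeff.sum fun m c => AddMonoidAlgebra.single m (c * q ^ m)

/-- The divided-difference operator `D_z = z⁻¹(1 - E_z)`, i.e. `(D_z f)(z) = (f(z) - f(qz))/z`. -/
noncomputable def Dop (q : ℂ) (f : AddMonoidAlgebra ℂ ℤ) : AddMonoidAlgebra ℂ ℤ :=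
  AddMonoidAlgebra.single (-1 : ℤ) (1 : ℂ) * (f - qScale q f)

lemma qScale_apply (q : ℂ) (f : AddMonoidAlgebra ℂ ℤ) (k : ℤ) :
    (qScale q f).coeff k = f.coeff k * q ^ k := by
  classical
  rw [qScale, AddMonoidAlgebra.coeff_finsuppSum, Finsupp.sum_apply, Finsupp.sum]
  simp only [AddMonoidAlgebra.coeff_single, Finsupp.single_apply]
  rw [Finset.sum_ite_eq' f.coeff.support k (fun m => f.coeff m * q ^ m)]
  split_ifs with h
  · rfl
  · rw [Finsupp.notMem_support_iff.mp h, zero_mul]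

lemma Dop_apply (q : ℂ) (f : AddMonoidAlgebra ℂ ℤ) (k : ℤ) :
    (Dop q f).coeff k = f.coeff (k + 1) * (1 - q ^ (k + 1)) := by
  rw [Dop, AddMonoidAlgebra.coeff_single_mul_apply, one_mul]
  have h : -(-1 : ℤ) + k = k + 1 := by ring
  rw [h]
  show f.coeff (k+1) - (qScale q f).coeff (k+1) = _
  rw [qScale_apply]; ring

lemma pow_apply_top (a : ℂ) (n : ℕ) :
    ∀ k : ℤ, (n : ℤ) ≤ k →
      (((AddMonoidAlgebra.single (1 : ℤ) a + AddMonoidAlgebra.single (-1 : ℤ) a) :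
        AddMonoidAlgebra ℂ ℤ) ^ n).coeff k = if k = (n : ℤ) then a ^ n else 0 := by
  induction n with
  | zero =>
    intro k hk
    show (1 : AddMonoidAlgebra ℂ ℤ).coeff k = _
    rw [AddMonoidAlgebra.one_def, AddMonoidAlgebra.coeff_single, Finsupp.single_apply]
    simp [eq_comm]
  | succ n ih =>
    intro k hk
    rw [pow_succ, mul_add, AddMonoidAlgebra.coeff_add, Finsupp.add_apply,
      AddMonoidAlgebra.coeff_mul_single_apply, AddMonoidAlgebra.coeff_mul_single_apply,
      ← sub_eq_add_neg, ← sub_eq_add_neg]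
    have h1 : (n : ℤ) ≤ k - 1 := by push_cast at hk ⊢; omega
    have h2 : (n : ℤ) ≤ k - (-1) := by push_cast at hk ⊢; omega
    rw [ih _ h1, ih _ h2]
    have h3 : k - (-1) ≠ (n : ℤ) := by push_cast at hk ⊢; omega
    rw [if_neg h3, zero_mul, add_zero]
    by_cases h : k = ((n : ℕ) + 1 : ℕ)
    · have : k - 1 = (n : ℤ) := by push_cast at h ⊢; omega
      rw [if_pos this, if_pos (by exact_mod_cast h), pow_succ]
    · have : k - 1 ≠ (n : ℤ) := by
        intro hc; apply h; push_cast; omega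
      rw [if_neg this, zero_mul, if_neg (by exact_mod_cast h)]

lemma Dop_step (q : ℂ) (f : AddMonoidAlgebra ℂ ℤ) (d : ℤ) (c : ℂ)
    (h : ∀ k, d ≤ k → f.coeff k = if k = d then c else 0) :
    ∀ k, d - 1 ≤ k → (Dop q f).coeff k = if k = d - 1 then c * (1 - q ^ d) else 0 := by
  intro k hk
  rw [Dop_apply, h (k + 1) (by omega)]
  by_cases hkd : k = d - 1
  · have hk1 : k + 1 = d := by omega
    rw [hk1, if_pos rfl, if_pos hkd]
  · rw [if_neg (by omega), zero_mul, if_neg hkd]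

lemma Dop_iter_coeff (q : ℂ) (hq : q ≠ 0) (n ν : ℕ) :
    ∀ k : ℤ, (n : ℤ) - ν ≤ k →
      ((Dop q)^[ν]
          (((AddMonoidAlgebra.single (1 : ℤ) (2⁻¹ : ℂ) + AddMonoidAlgebra.single (-1 : ℤ) (2⁻¹ : ℂ)) :
            AddMonoidAlgebra ℂ ℤ) ^ n)).coeff k
        = if k = (n : ℤ) - ν then
            (2 : ℂ)⁻¹ ^ n * ∏ i ∈ Finset.range ν, (1 - q ^ ((n : ℤ) - ν + 1) * q ^ i)
          else 0 := by
  induction ν with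
  | zero =>
    intro k hk
    simpa using pow_apply_top (2⁻¹ : ℂ) n k (by simpa using hk)
  | succ ν ih =>
    intro k hk
    rw [Function.iterate_succ_apply']
    have step := Dop_step q _ ((n : ℤ) - ν)
      ((2 : ℂ)⁻¹ ^ n * ∏ i ∈ Finset.range ν, (1 - q ^ ((n : ℤ) - ν + 1) * q ^ i)) ih
    have hd : (n : ℤ) - (ν + 1 : ℕ) = ((n : ℤ) - ν) - 1 := by push_cast; ring
    rw [hd] at hk ⊢
    rw [step k hk]
    by_cases hkd : k = (n : ℤ) - ν - 1
    · rw [if_pos hkd, if_pos hkd]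
      rw [Finset.prod_range_succ', mul_assoc]
      congr 1
      have e0 : (1 : ℂ) - q ^ ((n : ℤ) - ν - 1 + 1) * q ^ (0 : ℕ) = 1 - q ^ ((n : ℤ) - ν) := by
        norm_num
      rw [e0]
      congr 1
      apply Finset.prod_congr rfl
      intro i _
      have e1 : (n : ℤ) - ν - 1 + 1 = (n : ℤ) - ν := by ring
      rw [e1, pow_succ, zpow_add_one₀ hq]
      ring
    · rw [if_neg hkd, if_neg hkd]

/-- `D_z^ν(x^n) = 2^{-n} (q^{n-ν+1};q)_ν z^{n-ν} + (lower order terms)`: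
the difference `D_z^ν(x^n) - 2^{-n}(q^{n-ν+1};q)_ν z^{n-ν}` has zero coefficient of `z^k`
for every `k ≥ n - ν`, where `x = (z + z⁻¹)/2`. -/
theorem Dop_iter_leading_coeff (q : ℂ) (hq : q ≠ 0) (n ν : ℕ) :
    ∀ k : ℤ, (n : ℤ) - ν ≤ k →
      ((Dop q)^[ν]
          (((AddMonoidAlgebra.single (1 : ℤ) (2⁻¹ : ℂ) + AddMonoidAlgebra.single (-1 : ℤ) (2⁻¹ : ℂ)) :
            AddMonoidAlgebra ℂ ℤ) ^ n) -
        AddMonoidAlgebra.single ((n : ℤ) - ν)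
          ((2 : ℂ)⁻¹ ^ n * ∏ i ∈ Finset.range ν, (1 - q ^ ((n : ℤ) - ν + 1) * q ^ i))).coeff k
        = 0 := by
  intro k hk
  rw [AddMonoidAlgebra.coeff_sub, Finsupp.sub_apply, Dop_iter_coeff q hq n ν k hk,
    AddMonoidAlgebra.coeff_single, Finsupp.single_apply]
  by_cases h : k = (n : ℤ) - ν
  · rw [if_pos h, if_pos h.symm, sub_self]
  · rw [if_neg h, if_neg (fun hc => h hc.symm), sub_self]
end

section
/- Let q ∈ (0,1) and suppose L = ∑_{ν ∈ S} C_ν(z) E_z^ν is a q-difference operator on functions on the d-torus with finite S ⊂ ℤ^d, where E_z^ν f(z) = f(z q^ν). Suppose for each ν ∈ S: (i) C_ν(z) w(z) = C_{-ν}(z q^ν) w(z q^ν) identically, and (ii) C_ν(z) w(z) is holomorphic on each torus T_t^ν = {z : |z_j| = q^{-t ν_j}} for all t ∈ [0,1]. Then L is self-adjoint with respect to the inner product ⟨f,g⟩ = (4πi)^{-d} ∫_T f(z) g(z) w(z) ∏_j dz_j/z_j on the unit torus T, i.e., ⟨Lf, g⟩ = ⟨f, Lg⟩ for holomorphic f,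 g. -/
open MeasureTheory

open Set Complex in

lemma box_shift_invariant (d : ℕ) (h : (Fin d → ℝ) → ℂ) (hm : Measurable h)
    (hper : ∀ (m : Fin d → ℤ) (θ : Fin d → ℝ), h (fun j => θ j + 2 * Real.pi * m j) = h θ)
    (c : Fin d → ℝ) :
    ∫ θ in Set.pi Set.univ (fun _ : Fin d => Set.Icc (0:ℝ) (2*Real.pi)), h (θ + c)
      = ∫ θ in Set.pi Set.univ (fun _ : Fin d => Set.Icc (0:ℝ) (2*Real.pi)), h θ := by
  have hT : (0:ℝ) < 2 * Real.pi := by positivity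
  haveI : Fact ((0:ℝ) < 2 * Real.pi) := ⟨hT⟩
  set T : ℝ := 2 * Real.pi with hTdef
  -- replace Icc by Ioc
  have hIcc_Ioc : ∀ (k : (Fin d → ℝ) → ℂ),
      ∫ θ in Set.pi Set.univ (fun _ : Fin d => Set.Icc (0:ℝ) T), k θ
        = ∫ θ in Set.pi Set.univ (fun _ : Fin d => Set.Ioc (0:ℝ) (0 + T)), k θ := by
    intro k
    apply setIntegral_congr_set
    rw [MeasureTheory.volume_pi]
    simpa using (Measure.ae_eq_set_pi (μ := fun _ : Fin d => (volume : Measure ℝ))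
      (I := (Set.univ : Set (Fin d)))
      (s := fun _ => Set.Ioc (0:ℝ) (0+T)) (t := fun _ => Set.Icc (0:ℝ) T)
      (fun i _ => by rw [zero_add]; exact Ioc_ae_eq_Icc)).symm
  rw [hIcc_Ioc, hIcc_Ioc]
  -- restricted pi measure
  have hrestrict : Measure.pi (fun _ : Fin d => (volume : Measure ℝ).restrict (Set.Ioc (0:ℝ) (0 + T)))
      = (volume : Measure (Fin d → ℝ)).restrict
        (Set.pi Set.univ (fun _ : Fin d => Set.Ioc (0:ℝ) (0 + T))) := by
    refine Measure.pi_eq fun s hs => ?_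
    rw [Measure.restrict_apply (MeasurableSet.univ_pi hs), ← Set.pi_inter_distrib,
      MeasureTheory.volume_pi, Measure.pi_pi]
    simp_rw [Measure.restrict_apply (hs _)]
  -- the projection to the torus
  set Φ : (Fin d → ℝ) → (Fin d → AddCircle T) := fun θ j => (θ j : AddCircle T) with hΦdef
  have hΦmp : MeasurePreserving Φ
      (Measure.pi (fun _ : Fin d => (volume : Measure ℝ).restrict (Set.Ioc (0:ℝ) (0 + T))))
      (volume : Measure (Fin d → AddCircle T)) := by
    rw [MeasureTheory.volume_pi]
    exact measurePreserving_pi _ _ (fun _ => AddCircle.measurePreserving_mk T 0)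
  -- the lift of h
  set rep : AddCircle T → ℝ := fun x => ((AddCircle.equivIoc T 0 x : ℝ)) with hrepdef
  have hrep_meas : Measurable rep := by
    have : Measurable (AddCircle.measurableEquivIoc T 0) :=
      (AddCircle.measurableEquivIoc T 0).measurable
    exact measurable_subtype_coe.comp this
  have hrep_coe : ∀ x : ℝ, ∃ m : ℤ, rep ((x : AddCircle T)) = x + T * m := by
    intro x
    refine ⟨-(toIocDiv hT 0 x), ?_⟩
    have h1 : rep ((x : AddCircle T)) = toIocMod hT 0 x := by
      simp [hrepdef, AddCircle.equivIoc, QuotientAddGroup.equivIocMod_coe]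
    rw [h1, toIocMod]
    push_cast
    ring_nf
  set H : (Fin d → AddCircle T) → ℂ := fun ξ => h (fun j => rep (ξ j)) with hHdef
  have hH_meas : Measurable H := by
    apply hm.comp
    exact measurable_pi_lambda _ (fun j => hrep_meas.comp (measurable_pi_apply j))
  have hlift : ∀ θ : Fin d → ℝ, H (Φ θ) = h θ := by
    intro θ
    have : ∀ j, ∃ m : ℤ, rep ((θ j : AddCircle T)) = θ j + T * m := fun j => hrep_coe (θ j)
    choose m hmeq using this
    calc H (Φ θ) = h (fun j => θ j + T * m j) := by
          simp only [hHdef, hΦdef]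
          congr 1; funext j; exact hmeq j
      _ = h θ := hper m θ
  -- now transfer
  have key : ∀ b : Fin d → ℝ,
      ∫ θ in Set.pi Set.univ (fun _ : Fin d => Set.Ioc (0:ℝ) (0 + T)), h (θ + b)
        = ∫ ξ : Fin d → AddCircle T, H (ξ + Φ b) := by
    intro b
    rw [← hrestrict, ← hΦmp.map_eq, integral_map hΦmp.aemeasurable]
    · congr 1; funext θ
      rw [← hlift (θ + b)]
      congr 1
    · exact (hH_meas.comp (measurable_add_const (Φ b))).aestronglyMeasurable
  have key0 := key 0
  simp only [add_zero] at key0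
  have hΦ0 : Φ 0 = 0 := by funext j; simp [hΦdef]
  rw [key c, key0]
  · rw [hΦ0, ]
    have := integral_add_right_eq_self (μ := (volume : Measure (Fin d → AddCircle T))) H (Φ c)
    simpa using this

open Set Complex in
lemma deform (d : ℕ) (ν : Fin d → ℤ) (c : ℝ) (hc : c < 0)
    (H : (Fin d → ℂ) → ℂ)
    (hH : DifferentiableOn ℂ H {z : Fin d → ℂ | ∃ t ∈ Set.Icc (0:ℝ) 1,
        ∀ j, ‖z j‖ = Real.exp (t * ((ν j : ℝ) * c))}) :
    ∫ θ in Set.pi Set.univ (fun _ : Fin d => Set.Icc (0:ℝ) (2*Real.pi)),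
        H (fun j => Complex.exp ((((ν j : ℝ) * c : ℝ) : ℂ) + Complex.I * θ j))
      = ∫ θ in Set.pi Set.univ (fun _ : Fin d => Set.Icc (0:ℝ) (2*Real.pi)),
        H (fun j => Complex.exp (Complex.I * θ j)) := by
  have hc0 : c ≠ 0 := ne_of_lt hc
  set Box : Set (Fin d → ℝ) := Set.pi Set.univ (fun _ : Fin d => Set.Icc (0:ℝ) (2*Real.pi))
    with hBox
  have hBoxC : IsCompact Box := isCompact_univ_pi (fun _ => isCompact_Icc)
  have hBoxM : MeasurableSet Box := MeasurableSet.univ_pi (fun _ => measurableSet_Icc)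
  set a : Fin d → ℝ := fun j => (ν j : ℝ) * c with ha
  set s : Set (Fin d → ℂ) := {z : Fin d → ℂ | ∃ t ∈ Set.Icc (0:ℝ) 1,
      ∀ j, ‖z j‖ = Real.exp (t * ((ν j : ℝ) * c))} with hs
  -- the complex curve family
  set E : (Fin d → ℝ) → ℂ → (Fin d → ℂ) :=
    fun θ τ j => Complex.exp ((a j : ℂ) * τ + Complex.I * θ j) with hE
  have hEcont : ∀ θ, Continuous (E θ) := by
    intro θ
    refine continuous_pi fun j => Complex.continuous_exp.comp ?_
    exact (continuous_const.mul continuous_id).add continuous_const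
  have hEdiff : ∀ θ, Differentiable ℂ (E θ) := by
    intro θ
    refine differentiable_pi.mpr fun j => Complex.differentiable_exp.comp ?_
    exact (differentiable_id.const_mul _).add_const _
  have hEmem : ∀ θ τ, τ.re ∈ Set.Icc (0:ℝ) 1 → E θ τ ∈ s := by
    intro θ τ hτ
    refine ⟨τ.re, hτ, fun j => ?_⟩
    rw [hE]
    simp only []
    rw [Complex.norm_exp]
    congr 1
    simp [Complex.add_re, Complex.mul_re, Complex.ofReal_re, Complex.ofReal_im]
    ring
  have hHc := hH.continuousOn
  -- G t θ
  set G : ℝ → (Fin d → ℝ) → ℂ :=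
    fun t θ => H (fun j => Complex.exp (((t * a j : ℝ) : ℂ) + Complex.I * θ j)) with hG
  have hEG : ∀ (t : ℝ) (y : ℝ) (θ : Fin d → ℝ),
      E θ ((t : ℂ) + (y : ℂ) * Complex.I) = fun j => Complex.exp
        (((t * a j : ℝ) : ℂ) + Complex.I * ((θ j + y * a j : ℝ) : ℂ)) := by
    intro t y θ
    funext j
    rw [hE]
    simp only []
    congr 1
    push_cast
    ring
  have hGmem : ∀ (t : ℝ), t ∈ Set.Icc (0:ℝ) 1 → ∀ θ : Fin d → ℝ,
      (fun j => Complex.exp (((t * a j : ℝ) : ℂ) + Complex.I * θ j)) ∈ s := by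
    intro t ht θ
    refine ⟨t, ht, fun j => ?_⟩
    rw [Complex.norm_exp]
    congr 1
    simp [Complex.add_re, Complex.mul_re]
    exact Or.inl rfl
  have hGcont : ∀ t ∈ Set.Icc (0:ℝ) 1, Continuous (G t) := by
    intro t ht
    refine hHc.comp_continuous ?_ (fun θ => hGmem t ht θ)
    refine continuous_pi fun j => Complex.continuous_exp.comp ?_
    refine continuous_const.add ?_
    exact continuous_const.mul ((Complex.continuous_ofReal.comp (continuous_apply j)))
  have hGper : ∀ t ∈ Set.Icc (0:ℝ) 1, ∀ (m : Fin d → ℤ) (θ : Fin d → ℝ),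
      G t (fun j => θ j + 2 * Real.pi * m j) = G t θ := by
    intro t ht m θ
    rw [hG]
    simp only []
    congr 1
    funext j
    have harg : (((t * a j : ℝ) : ℂ) + Complex.I * ((θ j + 2 * Real.pi * m j : ℝ) : ℂ))
        = (((t * a j : ℝ) : ℂ) + Complex.I * ((θ j : ℝ) : ℂ))
          + (m j : ℂ) * (2 * (Real.pi : ℂ) * Complex.I) := by
      push_cast
      ring
    rw [harg, Complex.exp_add, Complex.exp_int_mul_two_pi_mul_I, mul_one]
  -- the height of the rectangle
  set U : ℝ := -(2 * Real.pi) / c with hU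
  have hU0 : 0 < U := by
    rw [hU]
    apply div_pos_of_neg_of_neg
    · have := Real.pi_pos; linarith
    · exact hc
  have hUne : U ≠ 0 := ne_of_gt hU0
  -- Cauchy on the rectangle, for each θ
  have rect : ∀ θ : Fin d → ℝ,
      ∫ y in (0:ℝ)..U, G 1 (θ + y • a) = ∫ y in (0:ℝ)..U, G 0 (θ + y • a) := by
    intro θ
    have hzre : (0:ℂ).re = 0 := by simp
    have hzim : (0:ℂ).im = 0 := by simp
    have hwre : ((1:ℂ) + (U:ℂ) * Complex.I).re = 1 := by simp
    have hwim : ((1:ℂ) + (U:ℂ) * Complex.I).im = U := by simp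
    have Hc : ContinuousOn (fun τ => H (E θ τ))
        (Set.uIcc ((0:ℂ)).re ((1:ℂ) + (U:ℂ)*Complex.I).re ×ℂ
          Set.uIcc ((0:ℂ)).im ((1:ℂ) + (U:ℂ)*Complex.I).im) := by
      refine hHc.comp (hEcont θ).continuousOn ?_
      intro τ hτ
      refine hEmem θ τ ?_
      rw [hzre, hwre] at hτ
      have := hτ.1
      rwa [Set.uIcc_of_le (by norm_num : (0:ℝ) ≤ 1)] at this
    have Hd : DifferentiableOn ℂ (fun τ => H (E θ τ))
        (Set.Ioo (min ((0:ℂ)).re ((1:ℂ) + (U:ℂ)*Complex.I).re)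
            (max ((0:ℂ)).re ((1:ℂ) + (U:ℂ)*Complex.I).re) ×ℂ
          Set.Ioo (min ((0:ℂ)).im ((1:ℂ) + (U:ℂ)*Complex.I).im)
            (max ((0:ℂ)).im ((1:ℂ) + (U:ℂ)*Complex.I).im)) := by
      intro τ hτ
      rw [hzre, hwre] at hτ
      have hre : τ.re ∈ Set.Ioo (0:ℝ) 1 := by
        have := hτ.1
        rwa [min_eq_left (by norm_num : (0:ℝ) ≤ 1), max_eq_right (by norm_num : (0:ℝ) ≤ 1)]
          at this
      have hmem : Complex.re ⁻¹' (Set.Icc (0:ℝ) 1) ∈ nhds τ := by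
        have hopen : IsOpen (Complex.re ⁻¹' (Set.Ioo (0:ℝ) 1)) :=
          isOpen_Ioo.preimage Complex.continuous_re
        exact Filter.mem_of_superset (hopen.mem_nhds hre)
          (Set.preimage_mono Set.Ioo_subset_Icc_self)
      have hdw : DifferentiableWithinAt ℂ (fun τ => H (E θ τ))
          (Complex.re ⁻¹' (Set.Icc (0:ℝ) 1)) τ := by
        refine DifferentiableWithinAt.comp τ
          (hH (E θ τ) (hEmem θ τ (Set.Ioo_subset_Icc_self hre)))
          ((hEdiff θ τ).differentiableWithinAt) ?_
        intro τ' hτ'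
        exact hEmem θ τ' hτ'
      exact (hdw.differentiableAt hmem).differentiableWithinAt
    have main := Complex.integral_boundary_rect_eq_zero_of_continuousOn_of_differentiableOn
      (fun τ => H (E θ τ)) 0 ((1:ℂ) + (U:ℂ) * Complex.I) Hc Hd
    rw [hzre, hzim, hwre, hwim] at main
    -- the two horizontal edges agree
    have hkey : ∀ j, (a j : ℂ) * (U : ℂ) = ((-(ν j) : ℤ) : ℂ) * (2 * (Real.pi:ℂ)) := by
      intro j
      have h1 : a j * U = ((-(ν j) : ℤ) : ℝ) * (2 * Real.pi) := by
        rw [ha, hU]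
        push_cast
        field_simp
      exact_mod_cast congrArg (fun x : ℝ => (x : ℂ)) h1
    have hedge : ∀ x : ℝ, E θ ((x:ℂ) + ((U:ℝ):ℂ) * Complex.I)
        = E θ ((x:ℂ) + ((0:ℝ):ℂ) * Complex.I) := by
      intro x
      funext j
      rw [hE]
      simp only []
      have harg : (a j : ℂ) * ((x:ℂ) + ((U:ℝ):ℂ) * Complex.I) + Complex.I * θ j
          = ((a j : ℂ) * ((x:ℂ) + ((0:ℝ):ℂ) * Complex.I) + Complex.I * θ j)
            + ((-(ν j) : ℤ) : ℂ) * (2 * (Real.pi:ℂ) * Complex.I) := by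
        have := hkey j
        push_cast at this ⊢
        linear_combination Complex.I * this
      rw [harg, Complex.exp_add, Complex.exp_int_mul_two_pi_mul_I, mul_one]
    have hhoriz : (∫ x in (0:ℝ)..(1:ℝ), (fun τ => H (E θ τ)) ((x:ℂ) + ((0:ℝ):ℂ) * Complex.I))
        = ∫ x in (0:ℝ)..(1:ℝ), (fun τ => H (E θ τ)) ((x:ℂ) + ((U:ℝ):ℂ) * Complex.I) := by
      refine intervalIntegral.integral_congr fun x _ => ?_
      simp only []
      exact congrArg H (hedge x).symm
    rw [← hhoriz, sub_self, zero_add, ← smul_sub] at main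
    rcases smul_eq_zero.mp main with hI | hsub
    · exact absurd hI Complex.I_ne_zero
    · have heq := sub_eq_zero.mp hsub
      calc ∫ y in (0:ℝ)..U, G 1 (θ + y • a)
          = ∫ y in (0:ℝ)..U, (fun τ => H (E θ τ)) (((1:ℝ):ℂ) + (y:ℂ) * Complex.I) := by
            refine intervalIntegral.integral_congr fun y _ => ?_
            simp only []
            rw [hEG 1 y θ, hG]
            simp only []
            congr 1
        _ = ∫ y in (0:ℝ)..U, (fun τ => H (E θ τ)) (((0:ℝ):ℂ) + (y:ℂ) * Complex.I) := by
            simpa using heq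
        _ = ∫ y in (0:ℝ)..U, G 0 (θ + y • a) := by
            refine intervalIntegral.integral_congr fun y _ => ?_
            simp only []
            rw [hEG 0 y θ, hG]
            simp only []
            congr 1
  -- Fubini and the shift invariance
  have hmap : Continuous (fun p : (Fin d → ℝ) × ℝ => p.1 + p.2 • a) :=
    continuous_fst.add (continuous_snd.smul continuous_const)
  have h01 : (1:ℝ) ∈ Set.Icc (0:ℝ) 1 := by norm_num
  have h00 : (0:ℝ) ∈ Set.Icc (0:ℝ) 1 := by norm_num
  have hcont1 : Continuous
      (fun p : (Fin d → ℝ) × ℝ => G 1 (p.1 + p.2 • a) - G 0 (p.1 + p.2 • a)) :=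
    ((hGcont 1 h01).comp hmap).sub ((hGcont 0 h00).comp hmap)
  have hpt : ∀ θ : Fin d → ℝ,
      ∫ y in Set.Ioc (0:ℝ) U, (G 1 (θ + y • a) - G 0 (θ + y • a)) = 0 := by
    intro θ
    have hmapθ : Continuous (fun y : ℝ => θ + y • a) :=
      continuous_const.add (continuous_id.smul continuous_const)
    have h1 : IntervalIntegrable (fun y => G 1 (θ + y • a)) volume 0 U :=
      ((hGcont 1 h01).comp hmapθ).intervalIntegrable 0 U
    have h2 : IntervalIntegrable (fun y => G 0 (θ + y • a)) volume 0 U :=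
      ((hGcont 0 h00).comp hmapθ).intervalIntegrable 0 U
    rw [← intervalIntegral.integral_of_le hU0.le,
      intervalIntegral.integral_sub h1 h2, rect θ, sub_self]
  have hdouble : ∫ θ in Box,
      (∫ y in Set.Ioc (0:ℝ) U, (G 1 (θ + y • a) - G 0 (θ + y • a))) = 0 := by
    have : (fun θ => ∫ y in Set.Ioc (0:ℝ) U, (G 1 (θ + y • a) - G 0 (θ + y • a)))
        = fun _ => (0:ℂ) := funext hpt
    rw [this, integral_zero]
  have hInt : Integrable
      (Function.uncurry (fun (θ : Fin d → ℝ) (y : ℝ) => G 1 (θ + y • a) - G 0 (θ + y • a)))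
      ((volume.restrict Box).prod (volume.restrict (Set.Ioc (0:ℝ) U))) := by
    rw [Measure.prod_restrict]
    refine IntegrableOn.mono_set ?_ (Set.prod_mono subset_rfl Set.Ioc_subset_Icc_self)
    exact hcont1.continuousOn.integrableOn_compact (hBoxC.prod isCompact_Icc)
  have hswap := MeasureTheory.integral_integral_swap
    (μ := volume.restrict Box) (ν := volume.restrict (Set.Ioc (0:ℝ) U))
    (f := fun (θ : Fin d → ℝ) (y : ℝ) => G 1 (θ + y • a) - G 0 (θ + y • a)) hInt
  set F1 : ℂ := ∫ θ in Box, G 1 θ with hF1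
  set F0 : ℂ := ∫ θ in Box, G 0 θ with hF0
  have hinner : ∀ y : ℝ,
      (∫ θ in Box, (G 1 (θ + y • a) - G 0 (θ + y • a))) = F1 - F0 := by
    intro y
    have hi1 : IntegrableOn (fun θ => G 1 (θ + y • a)) Box volume := by
      exact (((hGcont 1 h01).comp (continuous_id.add continuous_const)).continuousOn).integrableOn_compact hBoxC
    have hi2 : IntegrableOn (fun θ => G 0 (θ + y • a)) Box volume := by
      exact (((hGcont 0 h00).comp (continuous_id.add continuous_const)).continuousOn).integrableOn_compact hBoxC
    rw [integral_sub hi1 hi2]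
    rw [box_shift_invariant d (G 1) (hGcont 1 h01).measurable (hGper 1 h01) (y • a),
      box_shift_invariant d (G 0) (hGcont 0 h00).measurable (hGper 0 h00) (y • a)]
  have hzero2 : (0:ℂ) = U • (F1 - F0) := by
    calc (0:ℂ) = ∫ θ in Box,
          (∫ y in Set.Ioc (0:ℝ) U, (G 1 (θ + y • a) - G 0 (θ + y • a))) := hdouble.symm
      _ = ∫ y in Set.Ioc (0:ℝ) U, (∫ θ in Box, (G 1 (θ + y • a) - G 0 (θ + y • a))) := hswap
      _ = ∫ y in Set.Ioc (0:ℝ) U, (F1 - F0) := by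
          refine integral_congr_ae (Filter.Eventually.of_forall fun y => hinner y)
      _ = U • (F1 - F0) := by
          rw [setIntegral_const, Real.volume_real_Ioc_of_le hU0.le, sub_zero]
  have hFeq : F1 = F0 := by
    rcases smul_eq_zero.mp hzero2.symm with hU' | hd
    · exact absurd hU' hUne
    · exact sub_eq_zero.mp hd
  have e1 : (fun θ : Fin d → ℝ => H (fun j => Complex.exp ((((ν j : ℝ) * c : ℝ) : ℂ)
      + Complex.I * θ j))) = G 1 := by
    funext θ
    rw [hG]
    simp only [one_mul]
    rfl
  have e0 : (fun θ : Fin d → ℝ => H (fun j => Complex.exp (Complex.I * θ j))) = G 0 := by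
    funext θ
    rw [hG]
    simp only [zero_mul, Complex.ofReal_zero, zero_add]
  rw [show (∫ θ in Box, H (fun j => Complex.exp ((((ν j : ℝ) * c : ℝ) : ℂ) + Complex.I * θ j)))
      = F1 from by rw [hF1]; exact congrArg _ e1]
  rw [show (∫ θ in Box, H (fun j => Complex.exp (Complex.I * θ j))) = F0 from by
    rw [hF0]; exact congrArg _ e0]
  exact hFeq

open Set Complex in
/-- Self-adjointness criterion (Lemma 4.1): if `L = ∑_{ν ∈ S} C_ν(z) E_z^ν` satisfies
(i) `C_ν(z) w(z) = C_{-ν}(zq^ν) w(zq^ν)` and (ii) `C_ν(z) w(z)` is holomorphic on each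
torus `T_t^ν = {z : |z_j| = q^{-t ν_j}}`, `t ∈ [0,1]`, then `L` is self-adjoint for the
inner product `⟨f,g⟩ = (4πi)^{-d} ∫_T f g w ∏_j dz_j/z_j` on the unit torus, here written
in the angular parametrization `z_j = e^{iθ_j}`. -/
theorem selfadjoint_criterion (d : ℕ) (q : ℝ) (hq0 : 0 < q) (hq1 : q < 1)
    (S : Finset (Fin d → ℤ)) (hS : ∀ ν ∈ S, -ν ∈ S)
    (C : (Fin d → ℤ) → (Fin d → ℂ) → ℂ) (w : (Fin d → ℂ) → ℂ)
    (hi : ∀ ν ∈ S, ∀ z : Fin d → ℂ,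
      C ν z * w z =
        C (-ν) (fun j => z j * (q : ℂ) ^ (ν j)) * w (fun j => z j * (q : ℂ) ^ (ν j)))
    (hii : ∀ ν ∈ S, DifferentiableOn ℂ (fun z => C ν z * w z)
      {z : Fin d → ℂ | ∃ t ∈ Set.Icc (0 : ℝ) 1,
        ∀ j, ‖z j‖ = q ^ (-(t * (ν j : ℝ)))})
    (f g : (Fin d → ℂ) → ℂ) (hf : Differentiable ℂ f) (hg : Differentiable ℂ g) :
    let e : (Fin d → ℝ) → (Fin d → ℂ) := fun θ j => Complex.exp (Complex.I * θ j)
    let L : ((Fin d → ℂ) → ℂ) → ((Fin d → ℂ) → ℂ) :=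
      fun h z => ∑ ν ∈ S, C ν z * h (fun j => z j * (q : ℂ) ^ (ν j))
    let inner : ((Fin d → ℂ) → ℂ) → ((Fin d → ℂ) → ℂ) → ℂ :=
      fun h₁ h₂ => (1 / (4 * Real.pi) ^ d : ℂ) *
        ∫ θ in Set.pi Set.univ (fun _ : Fin d => Set.Icc (0 : ℝ) (2 * Real.pi)),
          h₁ (e θ) * h₂ (e θ) * w (e θ)
    inner (L f) g = inner f (L g) := by
  intro e L inner
  have hqC : ((q : ℂ)) ≠ 0 := Complex.ofReal_ne_zero.mpr (ne_of_gt hq0)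
  have hlogq : Real.log q < 0 := Real.log_neg hq0 hq1
  set Box : Set (Fin d → ℝ) := Set.pi Set.univ (fun _ : Fin d => Set.Icc (0:ℝ) (2*Real.pi))
    with hBox
  have hBoxC : IsCompact Box := isCompact_univ_pi (fun _ => isCompact_Icc)
  -- exponential form of integer powers of q
  have hzq : ∀ n : ℤ, ((q:ℂ)) ^ n = Complex.exp ((((n : ℝ) * Real.log q : ℝ)) : ℂ) := by
    intro n
    have h1 : q ^ n = Real.exp ((n : ℝ) * Real.log q) := by
      rw [← Real.log_zpow, Real.exp_log (zpow_pos hq0 n)]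
    calc ((q:ℂ)) ^ n = (((q ^ n : ℝ)) : ℂ) := by push_cast; ring
      _ = Complex.exp ((((n : ℝ) * Real.log q : ℝ)) : ℂ) := by rw [h1, Complex.ofReal_exp]
  -- continuity of the torus embedding
  have he_cont : Continuous e := by
    refine continuous_pi fun j => Complex.continuous_exp.comp ?_
    exact continuous_const.mul (Complex.continuous_ofReal.comp (continuous_apply j))
  have he_mem : ∀ (μ : Fin d → ℤ), ∀ θ, e θ ∈ {z : Fin d → ℂ | ∃ t ∈ Set.Icc (0 : ℝ) 1,
      ∀ j, ‖z j‖ = q ^ (-(t * (μ j : ℝ)))} := by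
    intro μ θ
    refine ⟨0, ⟨le_refl 0, zero_le_one⟩, fun j => ?_⟩
    rw [Complex.norm_exp]
    simp [Real.rpow_zero]
  -- continuity of the coefficient functions on the torus
  have hCw_cont : ∀ μ ∈ S, Continuous (fun θ => C μ (e θ) * w (e θ)) := by
    intro μ hμ
    exact ((hii μ hμ).continuousOn).comp_continuous he_cont (he_mem μ)
  -- continuity of shifted compositions
  have hshift_cont : ∀ (h : (Fin d → ℂ) → ℂ), Differentiable ℂ h → ∀ (μ : Fin d → ℤ),
      Continuous (fun θ => h (fun j => e θ j * (q:ℂ) ^ (μ j))) := by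
    intro h hh μ
    refine hh.continuous.comp (continuous_pi fun j => ?_)
    exact ((continuous_apply j).comp he_cont).mul continuous_const
  -- integrands
  set A : (Fin d → ℤ) → (Fin d → ℝ) → ℂ :=
    fun μ θ => (C μ (e θ) * w (e θ)) * (f (fun j => e θ j * (q:ℂ) ^ (μ j)) * g (e θ)) with hA
  set B : (Fin d → ℤ) → (Fin d → ℝ) → ℂ :=
    fun μ θ => (C μ (e θ) * w (e θ)) * (f (e θ) * g (fun j => e θ j * (q:ℂ) ^ (μ j))) with hB
  have hA_cont : ∀ μ ∈ S, Continuous (A μ) := by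
    intro μ hμ
    exact (hCw_cont μ hμ).mul ((hshift_cont f hf μ).mul (hg.continuous.comp he_cont))
  have hB_cont : ∀ μ ∈ S, Continuous (B μ) := by
    intro μ hμ
    exact (hCw_cont μ hμ).mul ((hf.continuous.comp he_cont).mul (hshift_cont g hg μ))
  -- the key identity for each ν ∈ S
  have key : ∀ ν ∈ S, ∫ θ in Box, A ν θ = ∫ θ in Box, B (-ν) θ := by
    intro ν hν
    have hν' : -ν ∈ S := hS ν hν
    -- the auxiliary function H
    set H : (Fin d → ℂ) → ℂ := fun z =>
      (C (-ν) z * w z) * (f z * g (fun j => z j * (q:ℂ) ^ ((-ν) j))) with hH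
    -- H is differentiable on the deformation region
    have hval : ∀ (t : ℝ) (j : Fin d), q ^ (-(t * (((-ν) j : ℤ) : ℝ)))
        = Real.exp (t * ((ν j : ℝ) * Real.log q)) := by
      intro t j
      rw [Real.rpow_def_of_pos hq0]
      congr 1
      simp only [Pi.neg_apply, Int.cast_neg]
      ring
    have hseteq : {z : Fin d → ℂ | ∃ t ∈ Set.Icc (0 : ℝ) 1,
        ∀ j, ‖z j‖ = q ^ (-(t * (((-ν) j : ℤ) : ℝ)))}
        = {z : Fin d → ℂ | ∃ t ∈ Set.Icc (0:ℝ) 1,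
        ∀ j, ‖z j‖ = Real.exp (t * ((ν j : ℝ) * Real.log q))} := by
      ext z
      simp only [Set.mem_setOf_eq, hval]
    have hMdiff : Differentiable ℂ (fun z : Fin d → ℂ => (fun j => z j * (q:ℂ) ^ ((-ν) j))) := by
      refine differentiable_pi.mpr fun j => ?_
      exact ((ContinuousLinearMap.proj j : ((Fin d → ℂ) →L[ℂ] ℂ)).differentiable).mul_const _
    have hHd : DifferentiableOn ℂ H {z : Fin d → ℂ | ∃ t ∈ Set.Icc (0:ℝ) 1,
        ∀ j, ‖z j‖ = Real.exp (t * ((ν j : ℝ) * Real.log q))} := by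
      rw [← hseteq]
      exact (hii (-ν) hν').mul ((hf.differentiableOn).mul ((hg.comp hMdiff).differentiableOn))
    -- pointwise: A ν θ = H (e θ * q^ν)
    have hpt : ∀ θ, A ν θ = H (fun j => e θ j * (q:ℂ) ^ (ν j)) := by
      intro θ
      set zq : Fin d → ℂ := fun j => e θ j * (q:ℂ) ^ (ν j) with hzqdef
      have hz : (fun j => zq j * (q:ℂ) ^ ((-ν) j)) = e θ := by
        funext j
        simp only [hzqdef, Pi.neg_apply]
        rw [zpow_neg, mul_assoc, mul_inv_cancel₀ (zpow_ne_zero _ hqC), mul_one]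
      calc A ν θ = (C (-ν) zq * w zq) * (f zq * g (e θ)) := by
            rw [hA]
            simp only []
            rw [hi ν hν (e θ)]
        _ = H zq := by
            rw [hH]
            simp only []
            rw [hz]
    -- exponential form of the shifted torus
    have hexp1 : ∀ θ : Fin d → ℝ, (fun j => e θ j * (q:ℂ) ^ (ν j))
        = fun j => Complex.exp ((((ν j : ℝ) * Real.log q : ℝ) : ℂ) + Complex.I * θ j) := by
      intro θ
      funext j
      rw [hzq (ν j), Complex.exp_add]
      ring
    calc ∫ θ in Box, A ν θ
        = ∫ θ in Box, H (fun j => Complex.exp ((((ν j : ℝ) * Real.log q : ℝ) : ℂ)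
            + Complex.I * θ j)) := by
          refine setIntegral_congr_fun (MeasurableSet.univ_pi fun _ => measurableSet_Icc)
            fun θ _ => ?_
          rw [hpt θ, hexp1 θ]
      _ = ∫ θ in Box, H (fun j => Complex.exp (Complex.I * θ j)) :=
          deform d ν (Real.log q) hlogq H hHd
      _ = ∫ θ in Box, B (-ν) θ := by
          refine setIntegral_congr_fun (MeasurableSet.univ_pi fun _ => measurableSet_Icc)
            fun θ _ => ?_
          rw [hB, hH]
  -- assemble
  show (1 / (4 * Real.pi) ^ d : ℂ) *
      (∫ θ in Box, (∑ ν ∈ S, C ν (e θ) * f (fun j => e θ j * (q:ℂ) ^ (ν j))) * g (e θ) * w (e θ))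
    = (1 / (4 * Real.pi) ^ d : ℂ) *
      (∫ θ in Box, f (e θ) * (∑ ν ∈ S, C ν (e θ) * g (fun j => e θ j * (q:ℂ) ^ (ν j))) * w (e θ))
  congr 1
  have hLHS : (fun θ => (∑ ν ∈ S, C ν (e θ) * f (fun j => e θ j * (q:ℂ) ^ (ν j)))
      * g (e θ) * w (e θ)) = fun θ => ∑ ν ∈ S, A ν θ := by
    funext θ
    rw [hA, Finset.sum_mul, Finset.sum_mul]
    exact Finset.sum_congr rfl fun ν _ => by ring
  have hRHS : (fun θ => f (e θ) * (∑ ν ∈ S, C ν (e θ) * g (fun j => e θ j * (q:ℂ) ^ (ν j)))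
      * w (e θ)) = fun θ => ∑ ν ∈ S, B ν θ := by
    funext θ
    rw [hB, Finset.mul_sum, Finset.sum_mul]
    exact Finset.sum_congr rfl fun ν _ => by ring
  rw [hLHS, hRHS]
  rw [integral_finset_sum S (fun ν hν => ((hA_cont ν hν).continuousOn).integrableOn_compact hBoxC),
    integral_finset_sum S (fun ν hν => ((hB_cont ν hν).continuousOn).integrableOn_compact hBoxC)]
  -- reindex the right-hand sum by ν ↦ -ν
  have hre : ∑ ν ∈ S, ∫ θ in Box, B ν θ = ∑ ν ∈ S, ∫ θ in Box, B (-ν) θ := by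
    refine Finset.sum_nbij' (fun ν => -ν) (fun ν => -ν) ?_ ?_ ?_ ?_ ?_
    · intro ν hν; exact hS ν hν
    · intro ν hν; exact hS ν hν
    · intro ν _; simp
    · intro ν _; simp
    · intro ν _; simp
  rw [hre]
  exact Finset.sum_congr rfl key
end
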